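/- The Laplace density p(θ) = (1/(2τ)) exp(−|θ|/τ) on ℝ is a variance-Gaussian mixture: p(θ) = ∫₀^∞ N(θ; 0, τ²λ) · exp(−λ/2)/2 · dλ, where N(θ; 0, σ²) denotes the Gaussian density with mean 0 and variance σ². Equivalently, ∫₀^∞ (1/√(2π τ² λ)) e^{−θ²/(2τ²λ)} (1/2) e^{−λ/2} dλ = (1/(2τ)) e^{−|θ|/τ}. -/

import Mathlib

open MeasureTheory Real Set

namespace LaplaceMixAux

lemma hasDerivAt_adiv {a x : ℝ} (hx : x ≠ 0) :
    HasDerivAt (fun t : ℝ => a / t) (-(a / x ^ 2)) x := by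
  have h : HasDerivAt (fun t : ℝ => a * t⁻¹) (a * (-(x ^ 2)⁻¹)) x :=
    (hasDerivAt_inv hx).const_mul a
  have h2 : (fun t : ℝ => a / t) = fun t : ℝ => a * t⁻¹ := by
    funext t; rw [div_eq_mul_inv]
  rw [h2, show -(a / x ^ 2) = a * (-(x ^ 2)⁻¹) by ring]
  exact h

lemma hasDerivAt_subdiv {a x : ℝ} (hx : x ≠ 0) :
    HasDerivAt (fun t : ℝ => t - a / t) (1 + a / x ^ 2) x := by
  have h : HasDerivAt (fun t : ℝ => t - a / t) (1 - -(a / x ^ 2)) x :=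
    (hasDerivAt_id x).sub (hasDerivAt_adiv hx)
  convert h using 1; ring

lemma image_adiv {a : ℝ} (ha : 0 < a) : (fun t : ℝ => a / t) '' Ioi 0 = Ioi 0 := by
  ext x
  constructor
  · rintro ⟨t, ht, rfl⟩
    exact div_pos ha ht
  · intro hx
    exact ⟨a / x, div_pos ha hx, by field_simp⟩

lemma injOn_adiv {a : ℝ} (ha : 0 < a) : InjOn (fun t : ℝ => a / t) (Ioi 0) := by
  intro x hx y hy h
  simp only at h
  rw [div_eq_div_iff (ne_of_gt hx) (ne_of_gt hy)] at h
  have := mul_left_cancel₀ (ne_of_gt ha) h.symm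
  linarith [this]

lemma image_subdiv {a : ℝ} (ha : 0 < a) :
    (fun t : ℝ => t - a / t) '' Ioi 0 = univ := by
  ext u
  simp only [mem_univ, iff_true, mem_image, mem_Ioi]
  have hs : Real.sqrt (u ^ 2 + 4 * a) ^ 2 = u ^ 2 + 4 * a :=
    Real.sq_sqrt (by positivity)
  have habs : |u| < Real.sqrt (u ^ 2 + 4 * a) := by
    rw [← Real.sqrt_sq_eq_abs]
    exact Real.sqrt_lt_sqrt (sq_nonneg u) (by linarith)
  have hpos : 0 < (u + Real.sqrt (u ^ 2 + 4 * a)) / 2 := by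
    have := neg_abs_le u
    linarith
  refine ⟨(u + Real.sqrt (u ^ 2 + 4 * a)) / 2, hpos, ?_⟩
  have hne : (u + Real.sqrt (u ^ 2 + 4 * a)) / 2 ≠ 0 := ne_of_gt hpos
  have hne2 : u + Real.sqrt (u ^ 2 + 4 * a) ≠ 0 := by
    intro hcontr; rw [hcontr] at hpos; norm_num at hpos
  field_simp
  nlinarith [hs]

lemma injOn_subdiv {a : ℝ} (ha : 0 < a) :
    InjOn (fun t : ℝ => t - a / t) (Ioi 0) := by
  intro x hx y hy h
  simp only at h
  have hx0 : (0:ℝ) < x := hx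
  have hy0 : (0:ℝ) < y := hy
  have h' : (x - y) * (x * y + a) = 0 := by
    have := h
    field_simp at this
    nlinarith [this]
  have hpos : 0 < x * y + a := by positivity
  have := mul_eq_zero.mp h'
  rcases this with h1 | h2
  · linarith [sub_eq_zero.mp h1]
  · linarith

lemma gauss_half : (∫ x : ℝ, Real.exp (-x ^ 2 / 2)) = Real.sqrt (2 * π) := by
  have h := integral_gaussian (1 / 2 : ℝ)
  rw [show π / (1 / 2 : ℝ) = 2 * π by ring] at h
  rw [← h]
  congr 1
  ext x
  congr 1
  ring

lemma integrableOn_g1 {a : ℝ} (ha : 0 ≤ a) :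
    IntegrableOn (fun t : ℝ => Real.exp (-(t - a / t) ^ 2 / 2)) (Ioi 0) := by
  have hg : Integrable (fun t : ℝ => Real.exp a * Real.exp (-(1 / 2 : ℝ) * t ^ 2)) :=
    (integrable_exp_neg_mul_sq (by norm_num)).const_mul _
  refine (hg.restrict (s := Ioi 0)).mono' ?_ ?_
  · refine ContinuousOn.aestronglyMeasurable ?_ measurableSet_Ioi
    apply Real.continuous_exp.comp_continuousOn
    apply ContinuousOn.div_const
    apply ContinuousOn.neg
    apply ContinuousOn.pow
    exact continuousOn_id.sub (continuousOn_const.div continuousOn_id fun x hx => ne_of_gt hx)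
  · filter_upwards [ae_restrict_mem measurableSet_Ioi] with t ht
    have ht0 : (0:ℝ) < t := ht
    rw [Real.norm_eq_abs, abs_of_pos (Real.exp_pos _), ← Real.exp_add]
    apply Real.exp_le_exp.mpr
    have hc : t * (a / t) = a := mul_div_cancel₀ a (ne_of_gt ht0)
    nlinarith [sq_nonneg (a / t)]

lemma integrableOn_g2 {a : ℝ} (ha : 0 < a) :
    IntegrableOn (fun t : ℝ => a / t ^ 2 * Real.exp (-(t - a / t) ^ 2 / 2)) (Ioi 0) := by
  have h := (integrableOn_image_iff_integrableOn_abs_deriv_smul measurableSet_Ioi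
      (f := fun t => a / t) (f' := fun t => -(a / t ^ 2))
      (fun x hx => (hasDerivAt_adiv (ne_of_gt hx)).hasDerivWithinAt)
      (injOn_adiv ha) (fun x => Real.exp (-(x - a / x) ^ 2 / 2)))
  rw [image_adiv ha] at h
  have h2 := h.mp (integrableOn_g1 ha.le)
  refine h2.congr_fun ?_ measurableSet_Ioi
  intro t ht
  have ht0 : (0:ℝ) < t := ht
  have hinv : a / (a / t) = t := by field_simp
  simp only [smul_eq_mul]
  rw [hinv, abs_neg, abs_of_pos (div_pos ha (pow_pos ht0 2))]
  congr 2
  ring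

lemma swap_eq {a : ℝ} (ha : 0 < a) :
    (∫ t in Ioi (0:ℝ), a / t ^ 2 * Real.exp (-(t - a / t) ^ 2 / 2))
      = ∫ t in Ioi (0:ℝ), Real.exp (-(t - a / t) ^ 2 / 2) := by
  have h := integral_image_eq_integral_abs_deriv_smul measurableSet_Ioi
      (f := fun t => a / t) (f' := fun t => -(a / t ^ 2))
      (fun x hx => (hasDerivAt_adiv (ne_of_gt hx)).hasDerivWithinAt)
      (injOn_adiv ha) (fun x => Real.exp (-(x - a / x) ^ 2 / 2))
  rw [image_adiv ha] at h
  rw [h]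
  apply setIntegral_congr_fun measurableSet_Ioi
  intro t ht
  have ht0 : (0:ℝ) < t := ht
  have hinv : a / (a / t) = t := by field_simp
  simp only [smul_eq_mul]
  rw [hinv, abs_neg, abs_of_pos (div_pos ha (pow_pos ht0 2))]
  congr 2
  ring

lemma I_val {a : ℝ} (ha : 0 ≤ a) :
    (∫ t in Ioi (0:ℝ), Real.exp (-(t - a / t) ^ 2 / 2)) = Real.sqrt (2 * π) / 2 := by
  rcases eq_or_lt_of_le ha with rfl | ha'
  · have h := integral_gaussian_Ioi (1 / 2 : ℝ)
    rw [show π / (1 / 2 : ℝ) = 2 * π by ring] at h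
    rw [← h]
    apply setIntegral_congr_fun measurableSet_Ioi
    intro t ht
    simp only [zero_div, sub_zero]
    congr 1
    ring
  · have hsum :
        (∫ t in Ioi (0:ℝ), Real.exp (-(t - a / t) ^ 2 / 2))
          + (∫ t in Ioi (0:ℝ), a / t ^ 2 * Real.exp (-(t - a / t) ^ 2 / 2))
          = Real.sqrt (2 * π) := by
      rw [← integral_add (integrableOn_g1 ha) (integrableOn_g2 ha')]
      have himg := integral_image_eq_integral_abs_deriv_smul measurableSet_Ioi
          (f := fun t => t - a / t) (f' := fun t => 1 + a / t ^ 2)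
          (fun x hx => (hasDerivAt_subdiv (ne_of_gt hx)).hasDerivWithinAt)
          (injOn_subdiv ha') (fun x => Real.exp (-x ^ 2 / 2))
      rw [image_subdiv ha'] at himg
      rw [← gauss_half]
      conv_rhs => rw [← setIntegral_univ]
      rw [himg]
      apply setIntegral_congr_fun measurableSet_Ioi
      intro t ht
      have ht0 : (0:ℝ) < t := ht
      simp only [smul_eq_mul]
      rw [abs_of_pos (by positivity : (0:ℝ) < 1 + a / t ^ 2)]
      ring
    rw [swap_eq ha'] at hsum
    linarith

lemma L2 {a : ℝ} (ha : 0 ≤ a) :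
    (∫ t in Ioi (0:ℝ), Real.exp (-t ^ 2 / 2 - a ^ 2 / (2 * t ^ 2)))
      = Real.exp (-a) * (Real.sqrt (2 * π) / 2) := by
  have h : ∀ t ∈ Ioi (0:ℝ),
      Real.exp (-t ^ 2 / 2 - a ^ 2 / (2 * t ^ 2))
        = Real.exp (-a) * Real.exp (-(t - a / t) ^ 2 / 2) := by
    intro t ht
    have ht0 : (0:ℝ) < t := ht
    rw [← Real.exp_add]
    congr 1
    field_simp
    ring
  rw [setIntegral_congr_fun measurableSet_Ioi h, integral_const_mul, I_val ha]

lemma L3 {a : ℝ} (ha : 0 ≤ a) :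
    (∫ lam in Ioi (0:ℝ), 1 / Real.sqrt lam * Real.exp (-a ^ 2 / (2 * lam) - lam / 2))
      = Real.sqrt (2 * π) * Real.exp (-a) := by
  have himg : (fun t : ℝ => t ^ 2) '' Ioi 0 = Ioi 0 := by
    ext x
    constructor
    · rintro ⟨t, ht, rfl⟩
      exact pow_pos (mem_Ioi.mp ht) 2
    · intro hx
      exact ⟨Real.sqrt x, Real.sqrt_pos.mpr hx, Real.sq_sqrt (le_of_lt hx)⟩
  have hinj : InjOn (fun t : ℝ => t ^ 2) (Ioi 0) := by
    intro x hx y hy h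
    simp only at h
    have hx0 : (0:ℝ) < x := hx
    have hy0 : (0:ℝ) < y := hy
    nlinarith
  have h := integral_image_eq_integral_abs_deriv_smul measurableSet_Ioi
      (f := fun t => t ^ 2) (f' := fun t => 2 * t)
      (fun x hx => by simpa using (hasDerivAt_pow 2 x).hasDerivWithinAt)
      hinj (fun lam => 1 / Real.sqrt lam * Real.exp (-a ^ 2 / (2 * lam) - lam / 2))
  rw [himg] at h
  rw [h]
  have h2 : ∀ t ∈ Ioi (0:ℝ),
      |2 * t| • (1 / Real.sqrt (t ^ 2) * Real.exp (-a ^ 2 / (2 * t ^ 2) - t ^ 2 / 2))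
        = 2 * Real.exp (-t ^ 2 / 2 - a ^ 2 / (2 * t ^ 2)) := by
    intro t ht
    have ht0 : (0:ℝ) < t := ht
    rw [smul_eq_mul, abs_of_pos (by linarith : (0:ℝ) < 2 * t), Real.sqrt_sq ht0.le,
      show -a ^ 2 / (2 * t ^ 2) - t ^ 2 / 2 = -t ^ 2 / 2 - a ^ 2 / (2 * t ^ 2) by ring]
    field_simp
  rw [setIntegral_congr_fun measurableSet_Ioi h2, integral_const_mul, L2 ha]
  ring

end LaplaceMixAux

open LaplaceMixAux

/-- The Laplace density is a variance mixture of zero-mean Gaussians with an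
exponential mixing density:
`∫₀^∞ N(θ; 0, τ²λ) · (1/2)e^{-λ/2} dλ = (1/(2τ)) e^{-|θ|/τ}`. -/
theorem laplace_is_variance_gaussian_mixture (τ θ : ℝ) (hτ : 0 < τ) :
    ∫ lam in Set.Ioi (0:ℝ),
        (1 / Real.sqrt (2 * π * (τ^2 * lam))) * Real.exp (-θ^2 / (2 * (τ^2 * lam)))
          * ((1/2) * Real.exp (-lam / 2))
      = (1 / (2 * τ)) * Real.exp (-|θ| / τ) := by
  set a := |θ| / τ with ha_def
  have ha : 0 ≤ a := div_nonneg (abs_nonneg θ) hτ.le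
  have h2π : (0:ℝ) < 2 * π := by positivity
  have hs : (0:ℝ) < Real.sqrt (2 * π) := Real.sqrt_pos.mpr h2π
  have key := L3 ha
  have hpt : ∀ lam ∈ Ioi (0:ℝ),
      (1 / Real.sqrt (2 * π * (τ^2 * lam))) * Real.exp (-θ^2 / (2 * (τ^2 * lam)))
          * ((1/2) * Real.exp (-lam / 2))
        = (1 / (2 * τ) * (1 / Real.sqrt (2 * π)))
            * (1 / Real.sqrt lam * Real.exp (-a ^ 2 / (2 * lam) - lam / 2)) := by
    intro lam hlam
    have hl : (0:ℝ) < lam := hlam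
    have hsqrt : Real.sqrt (2 * π * (τ^2 * lam))
        = Real.sqrt (2 * π) * (τ * Real.sqrt lam) := by
      rw [show 2 * π * (τ^2 * lam) = 2 * π * (τ^2 * lam) by ring, Real.sqrt_mul h2π.le,
        Real.sqrt_mul (by positivity : (0:ℝ) ≤ τ^2), Real.sqrt_sq hτ.le]
    have e1 : Real.exp (-θ^2 / (2 * (τ^2 * lam))) * Real.exp (-lam / 2)
        = Real.exp (-a ^ 2 / (2 * lam) - lam / 2) := by
      rw [← Real.exp_add]
      congr 1
      rw [ha_def, div_pow, sq_abs]
      field_simp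
      ring
    calc (1 / Real.sqrt (2 * π * (τ^2 * lam))) * Real.exp (-θ^2 / (2 * (τ^2 * lam)))
          * ((1/2) * Real.exp (-lam / 2))
        = (1 / (Real.sqrt (2 * π) * (τ * Real.sqrt lam)) * (1/2))
            * (Real.exp (-θ^2 / (2 * (τ^2 * lam))) * Real.exp (-lam / 2)) := by
          rw [hsqrt]; ring
      _ = (1 / (2 * τ) * (1 / Real.sqrt (2 * π)))
            * (1 / Real.sqrt lam * Real.exp (-a ^ 2 / (2 * lam) - lam / 2)) := by
          rw [e1]; ring
  rw [setIntegral_congr_fun measurableSet_Ioi hpt, integral_const_mul, key]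
  rw [show (1 / (2 * τ) * (1 / Real.sqrt (2 * π))) * (Real.sqrt (2 * π) * Real.exp (-a))
      = (Real.sqrt (2 * π) / Real.sqrt (2 * π)) * ((1 / (2 * τ)) * Real.exp (-a)) by ring,
    div_self hs.ne', one_mul, ha_def, neg_div]
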